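/- Let L be a perfect field of characteristic p > 0, let K be a finitely generated field extension of L of transcendence degree 1, and fix an algebraic closure Ω of K. If E is an intermediate field, K ⊆ E ⊆ Ω, which is a finite purely inseparable extension of K of degree p^n, then E = K^{1/p^n} = {x ∈ Ω : x^{p^n} ∈ K}. -/

import Mathlib

open Cardinal Polynomial

set_option maxHeartbeats 1000000
set_option synthInstance.maxHeartbeats 1000000

/-- Key bound: `[K^{1/p} : K] ≤ p` for `K` finitely generated of transcendence degree 1
over a perfect field, expressed as `[K : K^p] ≤ p` inside `Ω` via `Subfield.relrank`. -/
theorem aux_relrank_frobenius_le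
    {L K Ω : Type*} [Field L] [Field K] [Field Ω]
    [Algebra L K] [Algebra K Ω]
    (p : ℕ) [Fact p.Prime] [CharP L p] [PerfectField L]
    [ExpChar L p] [ExpChar Ω p]
    (hfg : (⊤ : IntermediateField L K).FG)
    (x : K) (hx : IsTranscendenceBasis L (fun _ : Unit => x)) :
    Subfield.relrank
      (Subfield.map (frobenius Ω p) (RingHom.fieldRange (algebraMap K Ω)))
      (RingHom.fieldRange (algebraMap K Ω)) ≤ (p : Cardinal) := by
  have hp : p.Prime := Fact.out
  set f := algebraMap K Ω with hf
  set K' := RingHom.fieldRange f with hK'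
  set φ := frobenius Ω p with hφ
  set g := f.comp (algebraMap L K) with hg
  set L' := RingHom.fieldRange g with hL'
  set x' := f x with hx'
  set M := Subfield.closure ((L' : Set Ω) ∪ {x'}) with hM
  set M' := Subfield.closure ((L' : Set Ω) ∪ {x' ^ p}) with hM'
  -- Frobenius fixes L'
  have hL'set : φ '' (L' : Set Ω) = (L' : Set Ω) := by
    apply Set.Subset.antisymm
    · rintro _ ⟨z, hz, rfl⟩
      rw [SetLike.mem_coe, RingHom.mem_fieldRange] at hz
      obtain ⟨a, rfl⟩ := hz
      refine SetLike.mem_coe.2 (RingHom.mem_fieldRange.2 ⟨a ^ p, ?_⟩)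
      rw [map_pow]; rfl
    · rintro z hz
      rw [SetLike.mem_coe, RingHom.mem_fieldRange] at hz
      obtain ⟨a, rfl⟩ := hz
      obtain ⟨b, rfl⟩ := surjective_frobenius L p a
      refine ⟨g b, SetLike.mem_coe.2 (RingHom.mem_fieldRange.2 ⟨b, rfl⟩), ?_⟩
      show (g b) ^ p = g (frobenius L p b)
      rw [frobenius_def, map_pow]
  have hL'K' : (L' : Set Ω) ⊆ (K' : Set Ω) := by
    rintro z hz
    rw [SetLike.mem_coe, RingHom.mem_fieldRange] at hz
    obtain ⟨a, rfl⟩ := hz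
    exact SetLike.mem_coe.2 (RingHom.mem_fieldRange.2 ⟨algebraMap L K a, rfl⟩)
  have hMK' : M ≤ K' := Subfield.closure_le.2
    (Set.union_subset hL'K' (Set.singleton_subset_iff.2 ⟨x, rfl⟩))
  have hxM : x' ∈ M := Subfield.subset_closure (Or.inr rfl)
  have hM'M : M' ≤ M := Subfield.closure_le.2
    (Set.union_subset (fun z hz => Subfield.subset_closure (Or.inl hz))
      (Set.singleton_subset_iff.2 (pow_mem hxM p)))
  have hMmap : M.map φ = M' := by
    rw [hM, RingHom.map_field_closure, Set.image_union, Set.image_singleton, hL'set,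
      show φ x' = x' ^ p from rfl]
  have hK''K' : K'.map φ ≤ K' := by
    rintro z hz
    rw [Subfield.mem_map] at hz
    obtain ⟨w, hw, rfl⟩ := hz
    exact pow_mem hw p
  have hM'K'' : M' ≤ K'.map φ := by
    rw [← hMmap]
    exact (Subfield.gc_map_comap φ).monotone_l hMK'
  -- finite dimensionality over L(x)
  set M₀ := IntermediateField.adjoin L (Set.range fun _ : Unit => x) with hM₀
  haveI halg : Algebra.IsAlgebraic (↥M₀) K := hx.isAlgebraic_field
  obtain ⟨S, hS⟩ := hfg
  have htop : IntermediateField.adjoin (↥M₀) ((↑S : Set K)) = ⊤ := by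
    apply IntermediateField.restrictScalars_injective L
    apply le_antisymm le_top
    rw [← hS]
    exact IntermediateField.adjoin_le_iff.2
      (fun s hs => IntermediateField.subset_adjoin (↥M₀) (↑S : Set K) hs)
  haveI hfd : FiniteDimensional (↥M₀) K := by
    haveI h2 : FiniteDimensional (↥M₀)
        (IntermediateField.adjoin (↥M₀) ((↑S : Set K))) :=
      IntermediateField.finiteDimensional_adjoin
        (fun s _ => (Algebra.IsAlgebraic.isAlgebraic (R := ↥M₀) s).isIntegral)
    rw [htop] at h2
    exact (IntermediateField.topEquiv (F := ↥M₀) (E := K)).toLinearEquiv.finiteDimensional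
  set dn := Module.finrank (↥M₀) K with hdnd
  have hdn0 : dn ≠ 0 := Module.finrank_pos.ne'
  have hM₀map : (M₀.toSubfield).map f = M := by
    rw [hM₀, IntermediateField.adjoin_toSubfield, RingHom.map_field_closure, hM]
    congr 1
    rw [Set.image_union]
    congr 1
    · rw [← Set.range_comp]
      ext z
      constructor
      · rintro ⟨a, rfl⟩
        exact SetLike.mem_coe.2 (RingHom.mem_fieldRange.2 ⟨a, rfl⟩)
      · intro hz
        rw [SetLike.mem_coe, RingHom.mem_fieldRange] at hz
        obtain ⟨a, rfl⟩ := hz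
        exact ⟨a, rfl⟩
    · rw [Set.range_const, Set.image_singleton]
  have hd : Subfield.relrank M K' = (dn : Cardinal) := by
    have h1 := Subfield.lift_relrank_map_map M₀.toSubfield (⊤ : Subfield K) f
    rw [hM₀map, ← RingHom.fieldRange_eq_map] at h1
    have h2 : Subfield.relrank M₀.toSubfield (⊤ : Subfield K) = (dn : Cardinal) := by
      have h3 : Subfield.relrank M₀.toSubfield (⊤ : Subfield K)
          = IntermediateField.relrank M₀ (⊤ : IntermediateField L K) := by
        rw [IntermediateField.relrank, IntermediateField.top_toSubfield]
      rw [h3, IntermediateField.relrank_top_right]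
      exact (Module.finrank_eq_rank _ _).symm
    rw [h2, Cardinal.lift_natCast] at h1
    rw [← Cardinal.lift_inj (b := (dn : Cardinal)), h1, Cardinal.lift_natCast]
  -- [M : M'] ≤ p
  have hx'pM' : x' ^ p ∈ M' := Subfield.subset_closure (Or.inr rfl)
  have haev : (Polynomial.aeval x')
      (X ^ p - C (⟨x' ^ p, hx'pM'⟩ : ↥M')) = 0 := by
    rw [map_sub, map_pow, aeval_X, aeval_C]
    exact sub_eq_zero.2 rfl
  have hint : IsIntegral (↥M') x' :=
    ⟨X ^ p - C (⟨x' ^ p, hx'pM'⟩ : ↥M'), monic_X_pow_sub_C _ hp.ne_zero, by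
      simpa [Polynomial.aeval_def] using haev⟩
  have ht : Subfield.relrank M' M ≤ (p : Cardinal) := by
    rw [Subfield.relrank_eq_rank_of_le hM'M]
    have heq : Subfield.extendScalars hM'M = IntermediateField.adjoin (↥M') {x'} := by
      apply IntermediateField.toSubfield_injective
      rw [Subfield.extendScalars_toSubfield, IntermediateField.adjoin_toSubfield]
      apply le_antisymm
      · rw [hM]
        apply Subfield.closure_le.2
        apply Set.union_subset
        · intro z hz
          have hzM' : z ∈ M' := Subfield.subset_closure (Or.inl hz)
          exact Subfield.subset_closure (Or.inl ⟨(⟨z, hzM'⟩ : ↥M'), rfl⟩)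
        · exact Set.singleton_subset_iff.2 (Subfield.subset_closure (Or.inr rfl))
      · apply Subfield.closure_le.2
        apply Set.union_subset
        · rintro _ ⟨⟨z, hz⟩, rfl⟩
          exact hM'M hz
        · exact Set.singleton_subset_iff.2 hxM
    rw [heq]
    haveI := IntermediateField.adjoin.finiteDimensional hint
    rw [← Module.finrank_eq_rank, IntermediateField.adjoin.finrank hint]
    have hdvd := minpoly.dvd (↥M') x' haev
    have hndeg := Polynomial.natDegree_le_of_dvd hdvd (monic_X_pow_sub_C _ hp.ne_zero).ne_zero
    rw [natDegree_X_pow_sub_C] at hndeg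
    exact_mod_cast hndeg
  -- cancellation
  have e1 := Subfield.relrank_mul_relrank hM'M hMK'
  have e2 := Subfield.relrank_mul_relrank hM'K'' hK''K'
  have e3 : Subfield.relrank M' (K'.map φ) = Subfield.relrank M K' := by
    rw [← hMmap]
    exact Subfield.relrank_map_map M K' φ
  set t := Subfield.relrank M' M with htd
  set r := Subfield.relrank (K'.map φ) K' with hrd
  have key : t * (dn : Cardinal) = (dn : Cardinal) * r := by
    rw [← hd, e1, ← e2, e3]
  have htfin : t < ℵ₀ := ht.trans_lt (nat_lt_aleph0 p)
  have hrfin : r < ℵ₀ := by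
    have h1 : r ≤ (dn : Cardinal) * r := by
      conv_lhs => rw [← one_mul r]
      exact mul_le_mul' (by exact_mod_cast Nat.one_le_iff_ne_zero.2 hdn0) le_rfl
    rw [← key] at h1
    exact h1.trans_lt (mul_lt_aleph0 htfin (nat_lt_aleph0 dn))
  have keyN : t.toNat * dn = dn * r.toNat := by
    have h1 := congrArg Cardinal.toNat key
    rwa [Cardinal.toNat_mul, Cardinal.toNat_mul, Cardinal.toNat_natCast] at h1
  have hrt : r.toNat = t.toNat :=
    Nat.eq_of_mul_eq_mul_left (Nat.pos_of_ne_zero hdn0)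
      (by rw [← keyN, Nat.mul_comm])
  calc r = ((r.toNat : ℕ) : Cardinal) := (Cardinal.cast_toNat_of_lt_aleph0 hrfin).symm
    _ = ((t.toNat : ℕ) : Cardinal) := by rw [hrt]
    _ ≤ (p : Cardinal) := by
        have := Cardinal.toNat_le_toNat ht (nat_lt_aleph0 p)
        rw [Cardinal.toNat_natCast] at this
        exact_mod_cast this

/-- Let `L` be a perfect field of characteristic `p > 0`, let `K` be a
finitely generated field extension of `L` of transcendence degree `1`, and fix an algebraic
closure `Ω` of `K`.  If `E` with `K ⊆ E ⊆ Ω` is a finite purely inseparable extension of `K`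
of degree `p^n`, then `E = K^{1/pⁿ} = {x ∈ Ω : x^{pⁿ} ∈ K}`. -/
theorem purely_inseparable_extension_eq_pn_th_root_field
    {L K Ω : Type*} [Field L] [Field K] [Field Ω]
    [Algebra L K] [Algebra K Ω]
    (p : ℕ) [Fact p.Prime] [CharP L p] [PerfectField L]
    [IsAlgClosed Ω] [Algebra.IsAlgebraic K Ω]
    (hfg : (⊤ : IntermediateField L K).FG)
    (x : K) (hx : IsTranscendenceBasis L (fun _ : Unit => x))
    (E : IntermediateField K Ω) [FiniteDimensional K E]
    [IsPurelyInseparable K E] (n : ℕ)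
    (hdeg : Module.finrank K E = p ^ n) :
    ∀ y : Ω, y ∈ E ↔ y ^ (p ^ n) ∈ (algebraMap K Ω).range := by
  have hp : p.Prime := Fact.out
  haveI : CharP K p := charP_of_injective_algebraMap (algebraMap L K).injective p
  haveI : CharP Ω p := charP_of_injective_algebraMap (algebraMap K Ω).injective p
  haveI : ExpChar L p := .prime hp
  haveI : ExpChar K p := .prime hp
  haveI : ExpChar Ω p := .prime hp
  set f := algebraMap K Ω with hf
  set K' := RingHom.fieldRange f with hK'
  set φ := frobenius Ω p with hφ
  -- the `m`-th root fields
  set R : ℕ → Subfield Ω := fun m => K'.comap (iterateFrobenius Ω p m) with hR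
  have hmemR : ∀ (m : ℕ) (y : Ω), y ∈ R m ↔ y ^ p ^ m ∈ K' := fun m y => Iff.rfl
  have hsurj : ∀ m : ℕ, Function.Surjective (iterateFrobenius Ω p m) :=
    fun m => (bijective_iterateFrobenius Ω p m).2
  have hrange : ∀ m : ℕ, K' ≤ (iterateFrobenius Ω p m).fieldRange :=
    fun m z _ => RingHom.mem_fieldRange.2 (hsurj m z)
  have hKR : ∀ m, K' ≤ R m := fun m z hz => (hmemR m z).2 (pow_mem hz _)
  have hRmono : ∀ m, R m ≤ R (m + 1) := by
    intro m z hz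
    rw [hmemR] at hz ⊢
    rw [pow_succ, pow_mul]
    exact pow_mem hz p
  -- the key bound
  have hr1 : Subfield.relrank K' (R 1) ≤ (p : Cardinal) := by
    have h0 := aux_relrank_frobenius_le (L := L) (K := K) (Ω := Ω) p hfg x hx
    have h1 : (K'.comap φ).map φ = K' :=
      Subfield.map_comap_eq_self (by
        intro z _
        obtain ⟨w, hw⟩ := surjective_frobenius Ω p z
        exact RingHom.mem_fieldRange.2 ⟨w, hw⟩)
    have h2 : Subfield.relrank K' (K'.comap φ) = Subfield.relrank (K'.map φ) K' := by
      have h4 := Subfield.relrank_map_map K' (K'.comap φ) φ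
      rw [h1] at h4
      exact h4.symm
    have h3 : R 1 = K'.comap φ := by
      rw [hR]
      simp only [iterateFrobenius_one]
      rfl
    rw [h3, h2]
    exact h0
  -- relrank of each step equals relrank of the first step
  have hstep : ∀ m : ℕ, Subfield.relrank (R m) (R (m + 1)) = Subfield.relrank K' (R 1) := by
    intro m
    have hmap1 : (R m).map (iterateFrobenius Ω p m) = K' :=
      Subfield.map_comap_eq_self (hrange m)
    have hmap2 : (R (m + 1)).map (iterateFrobenius Ω p m) = R 1 := by
      have hcomp : R (m + 1) = (R 1).comap (iterateFrobenius Ω p m) := by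
        rw [hR]
        simp only [Subfield.comap_comap, ← iterateFrobenius_add]
        rw [add_comm 1 m]
      rw [hcomp]
      exact Subfield.map_comap_eq_self (fun z _ => RingHom.mem_fieldRange.2 (hsurj m z))
    rw [← Subfield.relrank_map_map (R m) (R (m + 1)) (iterateFrobenius Ω p m), hmap1, hmap2]
  -- induction: relrank K' (R m) ≤ p ^ m
  have hind : ∀ m : ℕ, Subfield.relrank K' (R m) ≤ ((p ^ m : ℕ) : Cardinal) := by
    intro m
    induction m with
    | zero =>
        have : R 0 = K' := by
          rw [hR]
          simp only [iterateFrobenius_zero]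
          ext z
          exact Iff.rfl
        rw [this, Subfield.relrank_self]
        simp
    | succ m ih =>
        rw [← Subfield.relrank_mul_relrank (hKR m) (hRmono m), hstep m]
        calc Subfield.relrank K' (R m) * Subfield.relrank K' (R 1)
            ≤ ((p ^ m : ℕ) : Cardinal) * (p : Cardinal) := mul_le_mul' ih hr1
          _ = ((p ^ (m + 1) : ℕ) : Cardinal) := by
              rw [pow_succ]
              push_cast
              ring
  -- forward direction
  have hfwd : ∀ y : Ω, y ∈ E → ∃ c : K, f c = y ^ p ^ n := by
    intro y hy
    set z : E := ⟨y, hy⟩ with hz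
    obtain ⟨k, c, hminp⟩ := IsPurelyInseparable.minpoly_eq_X_pow_sub_C K p z
    have hzint : IsIntegral K z := IsIntegral.of_finite K z
    have hdvd : p ^ k ∣ p ^ n := by
      rw [← hdeg]
      have h1 := IntermediateField.adjoin.finrank hzint
      rw [hminp, natDegree_X_pow_sub_C] at h1
      rw [← h1]
      exact ⟨_, (Module.finrank_mul_finrank _ _ _).symm⟩
    have hkn : k ≤ n := by
      rcases le_or_gt k n with h | h
      · exact h
      · exfalso
        have := (pow_dvd_pow_iff hp.ne_zero (fun hu => hp.ne_one (Nat.isUnit_iff.1 hu))).1 hdvd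
        omega
    have hzc : z ^ p ^ k = algebraMap K E c := by
      have h1 := minpoly.aeval K z
      rw [hminp, map_sub, map_pow, aeval_X, aeval_C, sub_eq_zero] at h1
      exact h1
    have hyk : y ^ p ^ k = f c := by
      have h1 := congrArg (algebraMap (↥E) Ω) hzc
      rw [map_pow] at h1
      rw [show (algebraMap (↥E) Ω) z = y from rfl] at h1
      rw [h1, ← IsScalarTower.algebraMap_apply]
    refine ⟨c ^ p ^ (n - k), ?_⟩
    rw [map_pow, ← hyk, ← pow_mul, ← pow_add]
    congr 1
    rw [← Nat.add_sub_assoc hkn k, Nat.add_sub_cancel_left]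
  -- E.toSubfield ≤ R n
  have hEsub : E.toSubfield ≤ R n := by
    intro y hy
    obtain ⟨c, hc⟩ := hfwd y hy
    exact (hmemR n y).2 (RingHom.mem_fieldRange.2 ⟨c, hc⟩)
  -- relrank K' E = p ^ n
  have hrankE : Subfield.relrank K' E.toSubfield = ((p ^ n : ℕ) : Cardinal) := by
    have h1 : Subfield.relrank K' E.toSubfield
        = IntermediateField.relrank (⊥ : IntermediateField K Ω) E := by
      rw [IntermediateField.relrank, IntermediateField.bot_toSubfield]
    rw [h1, IntermediateField.relrank_bot_left, ← Module.finrank_eq_rank, hdeg]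
  -- squeezing
  set s := Subfield.relrank E.toSubfield (R n) with hs
  have hK'E : K' ≤ E.toSubfield := by
    rintro z ⟨c, rfl⟩
    exact E.algebraMap_mem c
  have hseq : ((p ^ n : ℕ) : Cardinal) * s = Subfield.relrank K' (R n) := by
    rw [← hrankE, hs]
    exact Subfield.relrank_mul_relrank hK'E hEsub
  have hle : ((p ^ n : ℕ) : Cardinal) * s ≤ ((p ^ n : ℕ) : Cardinal) := hseq ▸ hind n
  have hs0 : s ≠ 0 := by
    rw [hs, Subfield.relrank_eq_rank_of_le hEsub]
    exact rank_pos.ne'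
  have hsfin : s < ℵ₀ := by
    have h1 : s ≤ ((p ^ n : ℕ) : Cardinal) * s := by
      conv_lhs => rw [← one_mul s]
      exact mul_le_mul'
        (by exact_mod_cast Nat.one_le_iff_ne_zero.2 (pow_ne_zero n hp.ne_zero)) le_rfl
    exact (h1.trans hle).trans_lt (nat_lt_aleph0 _)
  have hsN : s.toNat = 1 := by
    have h2 := Cardinal.toNat_le_toNat hle (nat_lt_aleph0 _)
    rw [Cardinal.toNat_mul, Cardinal.toNat_natCast] at h2
    have h3 : s.toNat ≠ 0 := fun h => by
      rcases Cardinal.toNat_eq_zero.1 h with h | h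
      · exact hs0 h
      · exact absurd h (not_le.2 hsfin)
    have h4 : 0 < p ^ n := pow_pos hp.pos n
    have h5 : s.toNat ≤ 1 := Nat.le_of_mul_le_mul_left (by simpa using h2) h4
    omega
  have hs1 : s = 1 := by
    rw [← Cardinal.cast_toNat_of_lt_aleph0 hsfin, hsN, Nat.cast_one]
  have hbot : Subfield.extendScalars hEsub = (⊥ : IntermediateField (↥E.toSubfield) Ω) := by
    apply IntermediateField.rank_eq_one_iff.1
    rw [← Subfield.relrank_eq_rank_of_le hEsub, ← hs]
    exact hs1
  have h5 : R n = RingHom.fieldRange (algebraMap (↥E.toSubfield) Ω) := by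
    rw [← Subfield.extendScalars_toSubfield hEsub, hbot, IntermediateField.bot_toSubfield]
  intro y
  constructor
  · intro hy
    obtain ⟨c, hc⟩ := hfwd y hy
    exact ⟨c, hc⟩
  · intro hy
    have hyR : y ∈ R n := by
      obtain ⟨c, hc⟩ := hy
      exact (hmemR n y).2 (RingHom.mem_fieldRange.2 ⟨c, hc⟩)
    rw [h5] at hyR
    obtain ⟨⟨w, hw⟩, rfl⟩ := RingHom.mem_fieldRange.1 hyR
    exact hw
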